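/- The LTL₃ semantics assigns definitive sets: for every LTL formula φ and both answers b ∈ {T, F}, the set ⟦φ⟧₃ b is definitive, i.e., ↯(⟦φ⟧₃ b) = ⟦φ⟧₃ b. -/

import Mathlib

/-- A trace is a finite list of states or an infinite stream of states. -/
def Trace (σ : Type) := List σ ⊕ (ℕ → σ)

namespace Trace

variable {σ : Type}

/-- Concatenation of traces; if the first is infinite, the result is the first. -/
def app : Trace σ → Trace σ → Trace σ
  | Sum.inl l, Sum.inl l' => Sum.inl (l ++ l')
  | Sum.inl l, Sum.inr s =>
      Sum.inr (fun n => if h : n < l.length then l.get ⟨n, h⟩ else s (n - l.length))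
  | Sum.inr s, _ => Sum.inr s

instance : Append (Trace σ) := ⟨app⟩

/-- The empty trace ε. -/
def eps : Trace σ := Sum.inl []

/-- A trace is infinite iff it is a stream. -/
def Inf (t : Trace σ) : Prop := t.isRight

/-- Drop the first state of a trace. -/
def drop1 : Trace σ → Trace σ
  | Sum.inl [] => Sum.inl []
  | Sum.inl (_ :: l) => Sum.inl l
  | Sum.inr s => Sum.inr (fun n => s (n + 1))

/-- Drop the first `n` states of a trace. -/
def drop (t : Trace σ) (n : ℕ) : Trace σ := drop1^[n] t

/-- The first state of a trace, if any. -/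
def head? : Trace σ → Option σ
  | Sum.inl [] => none
  | Sum.inl (a :: _) => some a
  | Sum.inr s => some (s 0)

/-- The set of prefixes of a trace. -/
def pre (t : Trace σ) : Set (Trace σ) := {u | ∃ v, t = u ++ v}

/-- The set of prefixes of traces in a set: ↓X. -/
def preS (X : Set (Trace σ)) : Set (Trace σ) := ⋃ t ∈ X, pre t

/-- The set of extensions of a trace: ↑t. -/
def ext (t : Trace σ) : Set (Trace σ) := {u | ∃ v, u = t ++ v}

/-- The definitive prefixes of a set of traces: ↯X. -/
def dp (X : Set (Trace σ)) : Set (Trace σ) := {t | ext t ⊆ preS X}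

/-- A set of traces is definitive iff it equals its own set of definitive prefixes. -/
def Definitive (X : Set (Trace σ)) : Prop := X = dp X

/-- Definitive union ⩁ of a collection of trace sets. -/
def dUnionS (S : Set (Set (Trace σ))) : Set (Trace σ) := dp (⋃₀ S)

/-- Binary / indexed definitive union. -/
def dUnion (X Y : Set (Trace σ)) : Set (Trace σ) := dp (X ∪ Y)

def dUnionI {ι : Sort*} (X : ι → Set (Trace σ)) : Set (Trace σ) := dp (⋃ i, X i)

/-- The prepend operation ▷X. -/
def prepend (X : Set (Trace σ)) : Set (Trace σ) := {t | t.drop 1 ∈ X}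

/-- Σ^ω, the set of infinite traces. -/
def omegaSet (σ : Type) : Set (Trace σ) := {t | t.Inf}

/-- The first state of a trace, with the empty state as default. -/
def st0 {A : Type} (t : Trace (Set A)) : Set A := (t.head?).getD ∅

end Trace

/-- Syntax of LTL formulae over atomic propositions `A`. -/
inductive LTL (A : Type) where
  | top : LTL A
  | atom : A → LTL A
  | neg : LTL A → LTL A
  | and : LTL A → LTL A → LTL A
  | next : LTL A → LTL A
  | until_ : LTL A → LTL A → LTL A

namespace LTL

variable {A : Type}

open Trace

/-- Conventional LTL satisfaction on (infinite) traces. -/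
def Sat : Trace (Set A) → LTL A → Prop
  | t, .top => True
  | t, .atom a => a ∈ t.st0
  | t, .neg φ => ¬ Sat t φ
  | t, .and φ ψ => Sat t φ ∧ Sat t ψ
  | t, .next φ => Sat (t.drop 1) φ
  | t, .until_ φ ψ => ∃ i, Sat (t.drop i) ψ ∧ ∀ j < i, Sat (t.drop j) φ

/-- Answer-indexed family semantics of conventional LTL (sets of infinite traces). -/
def sem : LTL A → Bool → Set (Trace (Set A))
  | .top, true => omegaSet (Set A)
  | .top, false => ∅
  | .atom a, true => {t | t.Inf ∧ a ∈ t.st0}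
  | .atom a, false => {t | t.Inf ∧ a ∉ t.st0}
  | .neg φ, b => sem φ (!b)
  | .and φ ψ, true => sem φ true ∩ sem ψ true
  | .and φ ψ, false => sem φ false ∪ sem ψ false
  | .next φ, b => {t | t.drop 1 ∈ sem φ b}
  | .until_ φ ψ, true => {t | ∃ k, (∀ i < k, t.drop i ∈ sem φ true) ∧ t.drop k ∈ sem ψ true}
  | .until_ φ ψ, false => {t | ∀ k, (∃ i < k, t.drop i ∈ sem φ false) ∨ t.drop k ∈ sem ψ false}

/-- Answer-indexed family semantics of LTL₃ (definitive sets of finite-or-infinite traces). -/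
def sem3 : LTL A → Bool → Set (Trace (Set A))
  | .top, true => Set.univ
  | .top, false => ∅
  | .atom a, true => dp {t | t ≠ eps ∧ a ∈ t.st0}
  | .atom a, false => dp {t | t ≠ eps ∧ a ∉ t.st0}
  | .neg φ, b => sem3 φ (!b)
  | .and φ ψ, true => sem3 φ true ∩ sem3 ψ true
  | .and φ ψ, false => dUnion (sem3 φ false) (sem3 ψ false)
  | .next φ, b => prepend (sem3 φ b)
  | .until_ φ ψ, true =>
      dUnionI (fun k => (fun X => prepend X ∩ sem3 φ true)^[k] (sem3 ψ true))
  | .until_ φ ψ, false =>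
      ⋂ k, (fun X => dUnion (prepend X) (sem3 φ false))^[k] (sem3 ψ false)

end LTL

namespace Trace
variable {σ : Type}
-- auxiliary
lemma append_eps (t : Trace σ) : t ++ eps = t := by
  cases t with
  | inl l => show app _ _ = _; simp [app, eps]; rfl
  | inr s => rfl

lemma eps_append (t : Trace σ) : eps ++ t = t := by
  cases t with
  | inl l => rfl
  | inr s =>
    show app _ _ = _
    simp only [app, eps, List.length_nil]
    congr 1

lemma append_assoc' (t u v : Trace σ) : (t ++ u) ++ v = t ++ (u ++ v) := by
  cases t with
  | inr s => rfl
  | inl l =>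
    cases u with
    | inr s => rfl
    | inl l' =>
      cases v with
      | inl l'' => show Sum.inl _ = Sum.inl _; simp [instAppend, app]
      | inr s =>
        show app (Sum.inl (l ++ l')) _ = app _ (app _ _)
        simp only [app]
        congr 1; funext n
        rcases lt_or_ge n l.length with h | h
        · rw [dif_pos (by simp; omega), dif_pos h]
          simp [List.get_eq_getElem, List.getElem_append_left h]
        · rcases lt_or_ge n (l.length + l'.length) with h2 | h2
          · rw [dif_pos (by simp; omega), dif_neg (by omega), dif_pos (by omega)]
            rw [List.get_eq_getElem, List.get_eq_getElem, List.getElem_append_right (by omega : l.length ≤ n)]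
          · rw [dif_neg (by simp; omega), dif_neg (by omega), dif_neg (by omega)]
            congr 1; simp; omega

lemma mem_preS {X : Set (Trace σ)} {u : Trace σ} :
    u ∈ preS X ↔ ∃ x ∈ X, ∃ v, x = u ++ v := by
  simp [preS, pre]

lemma self_mem_ext (t : Trace σ) : t ∈ ext t := ⟨eps, (append_eps t).symm⟩

lemma subset_preS {X : Set (Trace σ)} : X ⊆ preS X := fun t ht =>
  mem_preS.2 ⟨t, ht, eps, (append_eps t).symm⟩

lemma preS_mono {X Y : Set (Trace σ)} (h : X ⊆ Y) : preS X ⊆ preS Y := by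
  intro u hu; rcases mem_preS.1 hu with ⟨x, hx, v, hv⟩
  exact mem_preS.2 ⟨x, h hx, v, hv⟩

lemma dp_mono {X Y : Set (Trace σ)} (h : X ⊆ Y) : dp X ⊆ dp Y :=
  fun _ ht => fun u hu => preS_mono h (ht hu)

lemma dp_idem (X : Set (Trace σ)) : Definitive (dp X) := by
  apply Set.eq_of_subset_of_subset
  · -- dp X ⊆ dp (dp X)
    intro t ht u hu
    rcases hu with ⟨v, rfl⟩
    refine mem_preS.2 ⟨t ++ v, ?_, eps, (append_eps _).symm⟩
    intro w hw; rcases hw with ⟨z, rfl⟩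
    exact ht ⟨v ++ z, append_assoc' t v z⟩
  · -- dp (dp X) ⊆ dp X
    intro t ht u hu
    rcases mem_preS.1 (ht hu) with ⟨s, hs, v, rfl⟩
    rcases mem_preS.1 (hs (self_mem_ext _)) with ⟨x, hx, w, hw⟩
    exact mem_preS.2 ⟨x, hx, v ++ w, by rw [hw, append_assoc']⟩

lemma def_ext_closed {X : Set (Trace σ)} (h : Definitive X) {t : Trace σ}
    (ht : t ∈ X) (v : Trace σ) : t ++ v ∈ X := by
  rw [h] at ht ⊢
  intro u hu; rcases hu with ⟨w, rfl⟩
  exact ht ⟨v ++ w, append_assoc' t v w⟩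

lemma def_iInter {ι : Sort*} {X : ι → Set (Trace σ)} (h : ∀ i, Definitive (X i)) :
    Definitive (⋂ i, X i) := by
  apply Set.eq_of_subset_of_subset
  · intro t ht u hu
    rcases hu with ⟨v, rfl⟩
    refine mem_preS.2 ⟨t ++ v, ?_, eps, (append_eps _).symm⟩
    exact Set.mem_iInter.2 fun i => def_ext_closed (h i) (Set.mem_iInter.1 ht i) v
  · intro t ht
    refine Set.mem_iInter.2 fun i => ?_
    rw [h i]
    intro u hu
    exact preS_mono (Set.iInter_subset X i) (ht hu)

lemma def_inter {X Y : Set (Trace σ)} (hX : Definitive X) (hY : Definitive Y) :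
    Definitive (X ∩ Y) := by
  apply Set.eq_of_subset_of_subset
  · intro t ht u hu
    rcases hu with ⟨v, rfl⟩
    exact subset_preS ⟨def_ext_closed hX ht.1 v, def_ext_closed hY ht.2 v⟩
  · intro t ht
    constructor
    · rw [hX]; intro u hu; exact preS_mono Set.inter_subset_left (ht hu)
    · rw [hY]; intro u hu; exact preS_mono Set.inter_subset_right (ht hu)

lemma def_empty : Definitive (∅ : Set (Trace σ)) := by
  apply Set.eq_of_subset_of_subset
  · exact Set.empty_subset _
  · intro t ht
    rcases mem_preS.1 (ht (self_mem_ext t)) with ⟨x, hx, -⟩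
    exact hx.elim

lemma def_univ : Definitive (Set.univ : Set (Trace σ)) := by
  apply Set.eq_of_subset_of_subset
  · intro t _ u _; exact subset_preS (Set.mem_univ u)
  · exact Set.subset_univ _

-- cons
def cons (a : σ) : Trace σ → Trace σ
  | Sum.inl l => Sum.inl (a :: l)
  | Sum.inr s => Sum.inr (fun n => Nat.rec a (fun m _ => s m) n)

lemma drop1_cons (a : σ) (t : Trace σ) : drop1 (cons a t) = t := by
  cases t with
  | inl l => rfl
  | inr s => simp [cons, drop1]; rfl

lemma drop_one (t : Trace σ) : t.drop 1 = drop1 t := rfl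

lemma cons_append (a : σ) (u v : Trace σ) : cons a (u ++ v) = cons a u ++ v := by
  cases u with
  | inr s => rfl
  | inl l =>
    cases v with
    | inl l' => rfl
    | inr s =>
      show cons a (app _ _) = app _ _
      simp only [app, cons, List.length_cons]
      congr 1; funext n
      cases n with
      | zero => simp
      | succ m =>
        simp only [Nat.add_sub_cancel, List.get_eq_getElem]
        rcases lt_or_ge m l.length with h | h
        · rw [dif_pos h, dif_pos (by omega)]; simp
        · rw [dif_neg (by omega), dif_neg (by omega)]
          congr 1; omega

lemma def_prepend {X : Set (Trace σ)} [Inhabited σ] (h : Definitive X) :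
    Definitive (prepend X) := by
  apply Set.eq_of_subset_of_subset
  · -- prepend X ⊆ dp (prepend X): show extension-closed then self prefix
    intro t ht u hu
    rcases hu with ⟨v, rfl⟩
    refine mem_preS.2 ⟨t ++ v, ?_, eps, (append_eps _).symm⟩
    show drop (t ++ v) 1 ∈ X
    rw [drop_one] at *
    cases t with
    | inl l =>
      cases l with
      | nil =>
        show drop1 (eps ++ v) ∈ X
        rw [eps_append]
        have : eps ++ drop1 v ∈ X := def_ext_closed h (by exact ht) _
        rwa [eps_append] at this
      | cons a l =>
        show drop1 (cons a (Sum.inl l) ++ v) ∈ X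
        have e := cons_append a (Sum.inl l) v
        rw [← e, drop1_cons]
        exact def_ext_closed h ht v
    | inr s => exact def_ext_closed h ht v
  · -- dp (prepend X) ⊆ prepend X
    intro t ht
    show t.drop 1 ∈ X
    rw [drop_one, h]
    intro u hu
    rcases hu with ⟨v, rfl⟩
    cases t with
    | inr s =>
      rcases mem_preS.1 (ht (self_mem_ext _)) with ⟨x, hx, w, hw⟩
      have hx2 : x = Sum.inr s := hw
      subst hx2
      have hd : drop1 (Sum.inr s) ∈ X := hx
      exact subset_preS (def_ext_closed h hd v)
    | inl l =>
      -- pick head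
      set a : σ := l.headD default with ha
      have hext : cons a (drop1 (Sum.inl l) ++ v) ∈ ext (Sum.inl l) := by
        cases l with
        | nil => exact ⟨cons a (drop1 (Sum.inl ([]:List σ)) ++ v), (eps_append _).symm⟩
        | cons b l' => exact ⟨v, by rw [cons_append]; rfl⟩
      rcases mem_preS.1 (ht hext) with ⟨x, hx, w, hw⟩
      refine mem_preS.2 ⟨x.drop 1, hx, w, ?_⟩
      rw [drop_one, hw, ← cons_append, drop1_cons]

end Trace

theorem sem3_definitive {A : Type} (φ : LTL A) (b : Bool) :
    Trace.Definitive (LTL.sem3 φ b) := by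
  induction φ generalizing b with
  | top =>
    cases b
    · exact Trace.def_empty
    · exact Trace.def_univ
  | atom a => cases b <;> exact Trace.dp_idem _
  | neg φ ih => cases b <;> exact ih _
  | and φ ψ ihφ ihψ =>
    cases b
    · exact Trace.dp_idem _
    · exact Trace.def_inter (ihφ true) (ihψ true)
  | next φ ih => cases b <;> exact Trace.def_prepend (ih _)
  | until_ φ ψ ihφ ihψ =>
    cases b
    · apply Trace.def_iInter
      intro k
      cases k with
      | zero => exact ihψ false
      | succ m =>
        rw [Function.iterate_succ_apply']
        exact Trace.dp_idem _
    · exact Trace.dp_idem _
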